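/- Let φ be an N-function that is C² on (0,∞), satisfies the Δ₂-condition with constant D, and is uniformly convex with constants 0 < c ≤ C. Define A : ℝ → ℝ by A(t) = φ'(|t|) t/|t| for t ≠ 0 and A(0) = 0. Then A is continuous and the pair (φ, A) satisfies the orthotropic growth conditions with constants depending only on c, C, D. -/

import Mathlib

open MeasureTheory

/-- An N-function `Φ` with derivative `Φ'`: differentiable on `[0,∞)` with
`Φ(0) = 0`, `Φ(t) = ∫₀ᵗ Φ'(s) ds`, `Φ'` nondecreasing, right-continuous,
`Φ'(0) = 0` and `Φ'(t) > 0` for `t > 0`. -/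
structure IsNFunction (Φ Φ' : ℝ → ℝ) : Prop where
  map_zero : Φ 0 = 0
  eq_integral : ∀ t : ℝ, 0 ≤ t → Φ t = ∫ s in (0:ℝ)..t, Φ' s
  deriv_zero : Φ' 0 = 0
  deriv_pos : ∀ t : ℝ, 0 < t → 0 < Φ' t
  deriv_mono : MonotoneOn Φ' (Set.Ici 0)
  deriv_rightCont : ∀ t : ℝ, 0 ≤ t → ContinuousWithinAt Φ' (Set.Ici t) t

/-- The Δ₂-condition with constant `D`. -/
def Delta2 (Φ : ℝ → ℝ) (D : ℝ) : Prop := ∀ t : ℝ, 0 < t → Φ (2 * t) ≤ D * Φ t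

/-- Uniform convexity with constants `c ≤ C`: `c Φ'(t) ≤ t Φ''(t) ≤ C Φ'(t)` for `t > 0`. -/
def UniformlyConvex (Φ' Φ'' : ℝ → ℝ) (c C : ℝ) : Prop :=
  ∀ t : ℝ, 0 < t → c * Φ' t ≤ t * Φ'' t ∧ t * Φ'' t ≤ C * Φ' t

/-- The orthotropic growth conditions for the pair `(φ, A)` with constants `c ≤ C`
(all terms vanish when `ξ = η`). -/
def OrthotropicGrowth (Φ'' A : ℝ → ℝ) (c C : ℝ) : Prop :=
  ∀ ξ η : ℝ, c * (Φ'' (|ξ| + |η|) * |ξ - η| ^ 2) ≤ (A ξ - A η) * (ξ - η) ∧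
    |A ξ - A η| ≤ C * (Φ'' (|ξ| + |η|) * |ξ - η|)

/-- `A(t) = φ'(|t|) t/|t|` for `t ≠ 0`, `A(0) = 0`. -/
noncomputable def Aof (Φ' : ℝ → ℝ) (t : ℝ) : ℝ :=
  if t = 0 then 0 else Φ' |t| * t / |t|

/-- for a uniformly convex N-function `φ` in `Δ₂`, the map
`A(t) = φ'(|t|) t/|t|` is continuous and `(φ, A)` satisfies the orthotropic growth
conditions with constants depending only on `c, C, D`. -/

lemma mono_aux {f f' : ℝ → ℝ} {a b : ℝ} (hab : a ≤ b)
    (hder : ∀ x ∈ Set.Icc a b, HasDerivAt f (f' x) x)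
    (hpos : ∀ x ∈ Set.Icc a b, 0 ≤ f' x) : f a ≤ f b := by
  have hcont : ContinuousOn f (Set.Icc a b) :=
    fun x hx => (hder x hx).continuousAt.continuousWithinAt
  have hdiff : DifferentiableOn ℝ f (interior (Set.Icc a b)) := by
    intro x hx
    rw [interior_Icc] at hx
    exact (hder x (Set.Ioo_subset_Icc_self hx)).differentiableAt.differentiableWithinAt
  have hd : ∀ x ∈ interior (Set.Icc a b), 0 ≤ deriv f x := by
    intro x hx
    rw [interior_Icc] at hx
    rw [(hder x (Set.Ioo_subset_Icc_self hx)).deriv]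
    exact hpos x (Set.Ioo_subset_Icc_self hx)
  exact monotoneOn_of_deriv_nonneg (convex_Icc a b) hcont hdiff hd
    (Set.left_mem_Icc.2 hab) (Set.right_mem_Icc.2 hab) hab

lemma anti_aux {f f' : ℝ → ℝ} {a b : ℝ} (hab : a ≤ b)
    (hder : ∀ x ∈ Set.Icc a b, HasDerivAt f (f' x) x)
    (hneg : ∀ x ∈ Set.Icc a b, f' x ≤ 0) : f b ≤ f a := by
  have := mono_aux (f := fun x => -f x) (f' := fun x => -f' x) hab
    (fun x hx => (hder x hx).neg) (fun x hx => neg_nonneg.2 (hneg x hx))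
  simp at this; linarith

lemma ratio_anti {φ' φ'' : ℝ → ℝ} {e : ℝ}
    (hd2 : ∀ t : ℝ, 0 < t → HasDerivAt φ' (φ'' t) t)
    (h : ∀ t : ℝ, 0 < t → t * φ'' t ≤ e * φ' t)
    {s t : ℝ} (hs : 0 < s) (hst : s ≤ t) :
    φ' t * t ^ (-e) ≤ φ' s * s ^ (-e) := by
  have hder : ∀ x ∈ Set.Icc s t,
      HasDerivAt (fun x => φ' x * x ^ (-e))
        (φ'' x * x ^ (-e) + φ' x * (-e * x ^ (-e - 1))) x := by
    intro x hx
    have hx0 : 0 < x := lt_of_lt_of_le hs hx.1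
    exact (hd2 x hx0).mul (Real.hasDerivAt_rpow_const (Or.inl hx0.ne'))
  refine anti_aux hst hder ?_
  intro x hx
  have hx0 : 0 < x := lt_of_lt_of_le hs hx.1
  have hkey : φ'' x * x ^ (-e) + φ' x * (-e * x ^ (-e - 1))
      = x ^ (-e - 1) * (x * φ'' x - e * φ' x) := by
    have : x ^ (-e) = x ^ (-e - 1) * x := by
      rw [show (-e) = (-e-1)+1 by ring, Real.rpow_add hx0, Real.rpow_one]; norm_num
    rw [this]; ring
  rw [hkey]
  have h1 : (0:ℝ) < x ^ (-e - 1) := Real.rpow_pos_of_pos hx0 _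
  have h2 := h x hx0
  nlinarith

lemma ratio_mono {φ' φ'' : ℝ → ℝ} {e : ℝ}
    (hd2 : ∀ t : ℝ, 0 < t → HasDerivAt φ' (φ'' t) t)
    (h : ∀ t : ℝ, 0 < t → e * φ' t ≤ t * φ'' t)
    {s t : ℝ} (hs : 0 < s) (hst : s ≤ t) :
    φ' s * s ^ (-e) ≤ φ' t * t ^ (-e) := by
  have hder : ∀ x ∈ Set.Icc s t,
      HasDerivAt (fun x => φ' x * x ^ (-e))
        (φ'' x * x ^ (-e) + φ' x * (-e * x ^ (-e - 1))) x := by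
    intro x hx
    have hx0 : 0 < x := lt_of_lt_of_le hs hx.1
    exact (hd2 x hx0).mul (Real.hasDerivAt_rpow_const (Or.inl hx0.ne'))
  refine mono_aux hst hder ?_
  intro x hx
  have hx0 : 0 < x := lt_of_lt_of_le hs hx.1
  have hkey : φ'' x * x ^ (-e) + φ' x * (-e * x ^ (-e - 1))
      = x ^ (-e - 1) * (x * φ'' x - e * φ' x) := by
    have : x ^ (-e) = x ^ (-e - 1) * x := by
      rw [show (-e) = (-e-1)+1 by ring, Real.rpow_add hx0, Real.rpow_one]; norm_num
    rw [this]; ring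
  rw [hkey]
  have h1 : (0:ℝ) < x ^ (-e - 1) := Real.rpow_pos_of_pos hx0 _
  have h2 := h x hx0
  nlinarith

lemma phip_up {φ' φ'' : ℝ → ℝ} {C : ℝ} (hC : 0 < C)
    (hd2 : ∀ t : ℝ, 0 < t → HasDerivAt φ' (φ'' t) t)
    (hup : ∀ t : ℝ, 0 < t → t * φ'' t ≤ C * φ' t)
    (hpos : ∀ t : ℝ, 0 < t → 0 < φ' t)
    {s t r : ℝ} (hs : 0 < s) (hst : s ≤ t) (htr : t ≤ r * s) :
    φ' t ≤ r ^ C * φ' s := by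
  have ht : 0 < t := hs.trans_le hst
  have h := ratio_anti hd2 hup hs hst
  rw [Real.rpow_neg ht.le, Real.rpow_neg hs.le, ← div_eq_mul_inv, ← div_eq_mul_inv] at h
  have ha : (0:ℝ) < t ^ C := Real.rpow_pos_of_pos ht C
  have hb : (0:ℝ) < s ^ C := Real.rpow_pos_of_pos hs C
  have h2 : φ' t * s ^ C ≤ φ' s * t ^ C := (div_le_div_iff₀ ha hb).mp h
  have hr : 0 < r := by nlinarith
  have h3 : t ^ C ≤ r ^ C * s ^ C := by
    rw [← Real.mul_rpow hr.le hs.le]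
    exact Real.rpow_le_rpow ht.le htr hC.le
  have hps : 0 < φ' s := hpos s hs
  rw [← mul_le_mul_iff_left₀ hb]
  calc φ' t * s ^ C ≤ φ' s * t ^ C := h2
    _ ≤ φ' s * (r ^ C * s ^ C) := by nlinarith
    _ = r ^ C * φ' s * s ^ C := by ring

lemma phip_down {φ' φ'' : ℝ → ℝ} {c : ℝ} (hc : 0 < c)
    (hd2 : ∀ t : ℝ, 0 < t → HasDerivAt φ' (φ'' t) t)
    (hdn : ∀ t : ℝ, 0 < t → c * φ' t ≤ t * φ'' t)
    {t : ℝ} (ht : 0 < t) :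
    (2:ℝ) ^ c * φ' (t / 2) ≤ φ' t := by
  have hs : (0:ℝ) < t / 2 := by linarith
  have h := ratio_mono hd2 hdn hs (by linarith : t / 2 ≤ t)
  rw [Real.rpow_neg ht.le, Real.rpow_neg hs.le, ← div_eq_mul_inv, ← div_eq_mul_inv] at h
  have ha : (0:ℝ) < t ^ c := Real.rpow_pos_of_pos ht c
  have hb : (0:ℝ) < (t / 2) ^ c := Real.rpow_pos_of_pos hs c
  have h2 : φ' (t / 2) * t ^ c ≤ φ' t * (t / 2) ^ c := (div_le_div_iff₀ hb ha).mp h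
  have h3 : t ^ c = 2 ^ c * (t / 2) ^ c := by
    rw [← Real.mul_rpow (by norm_num) hs.le]
    norm_num
    ring_nf
  rw [h3] at h2
  have := (mul_le_mul_iff_left₀ hb).mp (by linarith : 2 ^ c * φ' (t / 2) * (t / 2) ^ c ≤ φ' t * (t / 2) ^ c)
  linarith

lemma phipp_comp {φ' φ'' : ℝ → ℝ} {c C : ℝ} (hc : 0 < c) (hcC : c ≤ C)
    (hd2 : ∀ t : ℝ, 0 < t → HasDerivAt φ' (φ'' t) t)
    (hdn : ∀ t : ℝ, 0 < t → c * φ' t ≤ t * φ'' t)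
    (hup : ∀ t : ℝ, 0 < t → t * φ'' t ≤ C * φ' t)
    (hpos : ∀ t : ℝ, 0 < t → 0 < φ' t)
    (hmono : MonotoneOn φ' (Set.Ici 0))
    {s t : ℝ} (hs : 0 < s) (hst : s ≤ t) (ht4 : t ≤ 4 * s) :
    φ'' t ≤ 4 * (C / c) * (4:ℝ) ^ C * φ'' s ∧
      φ'' s ≤ 4 * (C / c) * (4:ℝ) ^ C * φ'' t := by
  have hC : 0 < C := lt_of_lt_of_le hc hcC
  have ht : 0 < t := hs.trans_le hst
  have hP : (1:ℝ) ≤ (4:ℝ) ^ C := by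
    rw [show (1:ℝ) = (1:ℝ) ^ C by simp]
    exact Real.rpow_le_rpow (by norm_num) (by norm_num) hC.le
  have hP0 : (0:ℝ) < (4:ℝ) ^ C := by linarith
  have hpps : 0 < φ'' s := by
    have := hdn s hs; have := hpos s hs; nlinarith
  have hppt : 0 < φ'' t := by
    have := hdn t ht; have := hpos t ht; nlinarith
  constructor
  · have h1 := hup t ht
    have h2 : φ' t ≤ (4:ℝ) ^ C * φ' s := phip_up hC hd2 hup hpos hs hst ht4
    have h3 := hdn s hs
    have e1 : c * (t * φ'' t) ≤ c * (C * φ' t) := mul_le_mul_of_nonneg_left h1 hc.le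
    have e2 : c * (C * φ' t) ≤ c * (C * ((4:ℝ) ^ C * φ' s)) :=
      mul_le_mul_of_nonneg_left (mul_le_mul_of_nonneg_left h2 hC.le) hc.le
    have e3 : C * (4:ℝ) ^ C * (c * φ' s) ≤ C * (4:ℝ) ^ C * (s * φ'' s) :=
      mul_le_mul_of_nonneg_left h3 (by positivity)
    have e4 : C * (4:ℝ) ^ C * (s * φ'' s) ≤ C * (4:ℝ) ^ C * (t * φ'' s) := by
      have : s * φ'' s ≤ t * φ'' s := mul_le_mul_of_nonneg_right hst hpps.le
      exact mul_le_mul_of_nonneg_left this (by positivity)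
    have h5' : t * (c * φ'' t) ≤ t * (C * (4:ℝ) ^ C * φ'' s) := by nlinarith [e1, e2, e3, e4]
    have h5 := le_of_mul_le_mul_left h5' ht
    have hpos' : (0:ℝ) ≤ C * (4:ℝ) ^ C * φ'' s := by positivity
    rw [show 4 * (C / c) * (4:ℝ) ^ C * φ'' s = (4 * C * (4:ℝ) ^ C * φ'' s) / c by
      field_simp, le_div_iff₀ hc]
    nlinarith [h5, hpos']
  · have h1 := hdn t ht
    have h2 : φ' s ≤ φ' t := hmono hs.le (hs.trans_le hst).le hst
    have h3 := hup s hs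
    have e1 : c * (s * φ'' s) ≤ c * (C * φ' s) := mul_le_mul_of_nonneg_left h3 hc.le
    have e2 : c * (C * φ' s) ≤ c * (C * φ' t) :=
      mul_le_mul_of_nonneg_left (mul_le_mul_of_nonneg_left h2 hC.le) hc.le
    have e3 : C * (c * φ' t) ≤ C * (t * φ'' t) := mul_le_mul_of_nonneg_left h1 hC.le
    have e4 : C * (t * φ'' t) ≤ C * (4 * s * φ'' t) := by
      have : t * φ'' t ≤ 4 * s * φ'' t := mul_le_mul_of_nonneg_right ht4 hppt.le
      exact mul_le_mul_of_nonneg_left this hC.le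
    have h5' : s * (c * φ'' s) ≤ s * (4 * C * φ'' t) := by nlinarith [e1, e2, e3, e4]
    have h5 := le_of_mul_le_mul_left h5' hs
    have hpos' : (0:ℝ) ≤ 4 * C * φ'' t := by positivity
    rw [show 4 * (C / c) * (4:ℝ) ^ C * φ'' t = (4 * C * (4:ℝ) ^ C * φ'' t) / c by
      field_simp, le_div_iff₀ hc]
    nlinarith [h5, hpos', mul_le_mul_of_nonneg_left hP (by positivity : (0:ℝ) ≤ 4 * C * φ'' t)]

lemma mvt_ub {φ' φ'' : ℝ → ℝ} {a b M : ℝ} (ha : 0 < a) (hab : a ≤ b)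
    (hd2 : ∀ t : ℝ, 0 < t → HasDerivAt φ' (φ'' t) t)
    (hM : ∀ x ∈ Set.Icc a b, φ'' x ≤ M) :
    φ' b - φ' a ≤ M * (b - a) := by
  have := mono_aux (f := fun x => M * x - φ' x) (f' := fun x => M - φ'' x) hab
    (fun x hx => by
      exact (((hasDerivAt_id x).const_mul M).sub (hd2 x (ha.trans_le hx.1))).congr_deriv (by simp))
    (fun x hx => by
      show (0:ℝ) ≤ M - φ'' x
      linarith [hM x hx])
  linarith

lemma mvt_lb {φ' φ'' : ℝ → ℝ} {a b m : ℝ} (ha : 0 < a) (hab : a ≤ b)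
    (hd2 : ∀ t : ℝ, 0 < t → HasDerivAt φ' (φ'' t) t)
    (hm : ∀ x ∈ Set.Icc a b, m ≤ φ'' x) :
    m * (b - a) ≤ φ' b - φ' a := by
  have := mono_aux (f := fun x => φ' x - m * x) (f' := fun x => φ'' x - m) hab
    (fun x hx => by
      exact ((hd2 x (ha.trans_le hx.1)).sub ((hasDerivAt_id x).const_mul m)).congr_deriv (by simp))
    (fun x hx => by
      show (0:ℝ) ≤ φ'' x - m
      linarith [hm x hx])
  linarith

noncomputable def Kc (c C : ℝ) : ℝ := 4 * (C / c) * (4:ℝ) ^ C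
noncomputable def cLow (c C : ℝ) : ℝ :=
  min (1 / Kc c C) ((1 - (2:ℝ) ^ (-c)) / (C * (2:ℝ) ^ C))
noncomputable def cUp (c C : ℝ) : ℝ := 4 / c + Kc c C

section main
variable {φ' φ'' : ℝ → ℝ} {c C : ℝ}

lemma basic_facts (hc : 0 < c) (hcC : c ≤ C) :
    0 < C ∧ 0 < Kc c C ∧ 1 ≤ Kc c C ∧ (1:ℝ) ≤ (4:ℝ) ^ C ∧ (1:ℝ) ≤ (2:ℝ) ^ C ∧
      (2:ℝ) ^ (-c) < 1 ∧ 0 < (2:ℝ) ^ c ∧ 0 < cLow c C := by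
  have hC : 0 < C := lt_of_lt_of_le hc hcC
  have h4 : (1:ℝ) ≤ (4:ℝ) ^ C := by
    rw [show (1:ℝ) = (1:ℝ) ^ C by simp]
    exact Real.rpow_le_rpow (by norm_num) (by norm_num) hC.le
  have h2 : (1:ℝ) ≤ (2:ℝ) ^ C := by
    rw [show (1:ℝ) = (1:ℝ) ^ C by simp]
    exact Real.rpow_le_rpow (by norm_num) (by norm_num) hC.le
  have hK : 0 < Kc c C := by
    have : 0 < C / c := div_pos hC hc
    have : (0:ℝ) < (4:ℝ) ^ C := by linarith
    unfold Kc; positivity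
  have hK1 : 1 ≤ Kc c C := by
    have hcc : 1 ≤ C / c := (one_le_div hc).2 hcC
    unfold Kc; nlinarith
  have hneg : (2:ℝ) ^ (-c) < 1 := by
    rw [show (1:ℝ) = (2:ℝ) ^ (0:ℝ) by simp]
    exact Real.rpow_lt_rpow_of_exponent_lt (by norm_num) (by linarith)
  have h2c : 0 < (2:ℝ) ^ c := Real.rpow_pos_of_pos (by norm_num) c
  have hcL : 0 < cLow c C := by
    apply lt_min
    · positivity
    · apply div_pos (by linarith)
      have : (0:ℝ) < (2:ℝ) ^ C := by linarith
      positivity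
  exact ⟨hC, hK, hK1, h4, h2, hneg, h2c, hcL⟩

set_option maxHeartbeats 1000000 in
lemma same_sign (hc : 0 < c) (hcC : c ≤ C)
    (hd2 : ∀ t : ℝ, 0 < t → HasDerivAt φ' (φ'' t) t)
    (hdn : ∀ t : ℝ, 0 < t → c * φ' t ≤ t * φ'' t)
    (hup : ∀ t : ℝ, 0 < t → t * φ'' t ≤ C * φ' t)
    (hpos : ∀ t : ℝ, 0 < t → 0 < φ' t)
    (hzero : φ' 0 = 0)
    (hmono : MonotoneOn φ' (Set.Ici 0))
    {η ξ : ℝ} (hη : 0 ≤ η) (hξ : η < ξ) :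
    cLow c C * (φ'' (ξ + η) * (ξ - η) ^ 2) ≤ (φ' ξ - φ' η) * (ξ - η) ∧
      φ' ξ - φ' η ≤ cUp c C * (φ'' (ξ + η) * (ξ - η)) := by
  obtain ⟨hC, hK, hK1, h4C, h2C, hneg, h2c, hcL⟩ := basic_facts hc hcC
  have hξ0 : 0 < ξ := lt_of_le_of_lt hη hξ
  set T := ξ + η with hTdef
  have hT : 0 < T := by positivity
  have hξT : ξ ≤ T := by linarith
  have hT2 : T ≤ 2 * ξ := by linarith
  have hppT : 0 < φ'' T := by
    have := hdn T hT; have := hpos T hT; nlinarith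
  have hδ : 0 < ξ - η := by linarith
  have hφη : 0 ≤ φ' η := by
    rcases eq_or_lt_of_le hη with h | h
    · rw [← h, hzero]
    · exact (hpos η h).le
  rcases le_or_gt (ξ / 2) η with hcase | hcase
  · -- η ≥ ξ/2 > 0
    have hη0 : 0 < η := by linarith
    have hcomp : ∀ x ∈ Set.Icc η ξ, φ'' x ≤ Kc c C * φ'' T ∧ φ'' T ≤ Kc c C * φ'' x := by
      intro x hx
      have hx0 : 0 < x := lt_of_lt_of_le hη0 hx.1
      have hxT : x ≤ T := by linarith [hx.2]
      have hT4 : T ≤ 4 * x := by linarith [hx.1]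
      have h := phipp_comp hc hcC hd2 hdn hup hpos hmono hx0 hxT hT4
      exact ⟨by simpa [Kc] using h.2, by simpa [Kc] using h.1⟩
    constructor
    · have hlb := mvt_lb (m := φ'' T / Kc c C) hη0 hξ.le hd2 (by
        intro x hx
        rw [div_le_iff₀ hK]
        have := (hcomp x hx).2
        nlinarith)
      have hmin : cLow c C ≤ 1 / Kc c C := min_le_left _ _
      have e1 : cLow c C * (φ'' T * (ξ - η) ^ 2) ≤ (1 / Kc c C) * (φ'' T * (ξ - η) ^ 2) :=
        mul_le_mul_of_nonneg_right hmin (by positivity)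
      have e2 : (φ'' T / Kc c C) * (ξ - η) * (ξ - η) ≤ (φ' ξ - φ' η) * (ξ - η) :=
        mul_le_mul_of_nonneg_right (by linarith) hδ.le
      calc cLow c C * (φ'' T * (ξ - η) ^ 2) ≤ (1 / Kc c C) * (φ'' T * (ξ - η) ^ 2) := e1
        _ = (φ'' T / Kc c C) * (ξ - η) * (ξ - η) := by ring
        _ ≤ (φ' ξ - φ' η) * (ξ - η) := e2
    · have hub := mvt_ub (M := Kc c C * φ'' T) hη0 hξ.le hd2
        (fun x hx => (hcomp x hx).1)
      have : 0 ≤ 4 / c * (φ'' T * (ξ - η)) := by positivity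
      unfold cUp
      nlinarith
  · -- η < ξ/2
    constructor
    · -- lower bound
      have hQ : φ' T ≤ (2:ℝ) ^ C * φ' (T / 2) := by
        have := phip_up hC hd2 hup hpos (by linarith : (0:ℝ) < T / 2)
          (by linarith : T / 2 ≤ T) (by linarith : T ≤ 2 * (T / 2))
        exact this
      have hq : (2:ℝ) ^ c * φ' (ξ / 2) ≤ φ' ξ := phip_down hc hd2 hdn hξ0
      have hmη : φ' η ≤ φ' (ξ / 2) :=
        hmono (Set.mem_Ici.2 hη) (Set.mem_Ici.2 (by linarith)) hcase.le
      have hmT : φ' (T / 2) ≤ φ' ξ :=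
        hmono (Set.mem_Ici.2 (by linarith)) (Set.mem_Ici.2 hξ0.le) (by linarith)
      have hupT := hup T hT
      set q := (2:ℝ) ^ c with hqdef
      set Q := (2:ℝ) ^ C with hQdef
      have hq1 : 1 < q := by
        rw [hqdef, show (1:ℝ) = (2:ℝ) ^ (0:ℝ) by simp]
        exact Real.rpow_lt_rpow_of_exponent_lt (by norm_num) hc
      have hQ0 : 0 < Q := by linarith
      -- key: q * φ' η ≤ φ' ξ
      have hkey : q * φ' η ≤ φ' ξ := by
        calc q * φ' η ≤ q * φ' (ξ / 2) := mul_le_mul_of_nonneg_left hmη h2c.le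
          _ ≤ φ' ξ := hq
      -- T φ'' T ≤ C Q φ' ξ
      have hT2' : T * φ'' T ≤ C * Q * φ' ξ := by
        calc T * φ'' T ≤ C * φ' T := hupT
          _ ≤ C * (Q * φ' (T / 2)) := mul_le_mul_of_nonneg_left hQ hC.le
          _ ≤ C * (Q * φ' ξ) := mul_le_mul_of_nonneg_left (mul_le_mul_of_nonneg_left hmT hQ0.le) hC.le
          _ = C * Q * φ' ξ := by ring
      -- multiply target by q * C * Q
      have hqCQ : 0 < q * (C * Q) := by positivity
      rw [← mul_le_mul_iff_right₀ hqCQ]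
      have hconst : q * (C * Q) * cLow c C ≤ q - 1 := by
        have h1 : cLow c C ≤ (1 - (2:ℝ) ^ (-c)) / (C * Q) := min_le_right _ _
        have h2 : (2:ℝ) ^ (-c) = 1 / q := by
          rw [hqdef, Real.rpow_neg (by norm_num : (0:ℝ) ≤ 2), one_div]
        have h3 : q * (C * Q) * cLow c C ≤ q * (C * Q) * ((1 - 1/q) / (C * Q)) := by
          rw [← h2]; exact mul_le_mul_of_nonneg_left h1 (by positivity)
        have h4 : q * (C * Q) * ((1 - 1/q) / (C * Q)) = q - 1 := by
          field_simp
        linarith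
      have hφξ : 0 < φ' ξ := hpos ξ hξ0
      have main : (q - 1) * (φ'' T * (ξ - η) ^ 2) ≤ q * (C * Q) * ((φ' ξ - φ' η) * (ξ - η)) := by
        have a1 : φ'' T * (ξ - η) ^ 2 ≤ (T * φ'' T) * (ξ - η) := by
          calc φ'' T * (ξ - η) ^ 2 = (φ'' T * (ξ - η)) * (ξ - η) := by ring
            _ ≤ (φ'' T * T) * (ξ - η) :=
                mul_le_mul_of_nonneg_right
                  (mul_le_mul_of_nonneg_left (by linarith) hppT.le) hδ.le
            _ = (T * φ'' T) * (ξ - η) := by ring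
        have a2 : (T * φ'' T) * (ξ - η) ≤ (C * Q * φ' ξ) * (ξ - η) :=
          mul_le_mul_of_nonneg_right hT2' hδ.le
        have a3 : (q - 1) * (φ'' T * (ξ - η) ^ 2) ≤ (q - 1) * ((C * Q * φ' ξ) * (ξ - η)) :=
          mul_le_mul_of_nonneg_left (a1.trans a2) (by linarith)
        have hx : (q - 1) * φ' ξ ≤ q * (φ' ξ - φ' η) := by linarith
        have hy : (0:ℝ) ≤ C * Q * (ξ - η) := by positivity
        have a4 := mul_le_mul_of_nonneg_right hx hy
        calc (q - 1) * (φ'' T * (ξ - η) ^ 2)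
            ≤ (q - 1) * ((C * Q * φ' ξ) * (ξ - η)) := a3
          _ = ((q - 1) * φ' ξ) * (C * Q * (ξ - η)) := by ring
          _ ≤ (q * (φ' ξ - φ' η)) * (C * Q * (ξ - η)) := a4
          _ = q * (C * Q) * ((φ' ξ - φ' η) * (ξ - η)) := by ring
      calc q * (C * Q) * (cLow c C * (φ'' T * (ξ - η) ^ 2))
          = (q * (C * Q) * cLow c C) * (φ'' T * (ξ - η) ^ 2) := by ring
        _ ≤ (q - 1) * (φ'' T * (ξ - η) ^ 2) :=
            mul_le_mul_of_nonneg_right hconst (by positivity)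
        _ ≤ q * (C * Q) * ((φ' ξ - φ' η) * (ξ - η)) := main
    · -- upper bound
      have hmξ : φ' ξ ≤ φ' T := hmono (Set.mem_Ici.2 hξ0.le) (Set.mem_Ici.2 hT.le) hξT
      have hdnT := hdn T hT
      have hT4 : T ≤ 4 * (ξ - η) := by linarith
      have hchain : c * (φ' ξ - φ' η) ≤ 4 * (ξ - η) * φ'' T := by
        have : c * φ' T ≤ T * φ'' T := hdnT
        have h2 : T * φ'' T ≤ 4 * (ξ - η) * φ'' T := mul_le_mul_of_nonneg_right hT4 hppT.le
        nlinarith [mul_le_mul_of_nonneg_left hmξ hc.le]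
      rw [← mul_le_mul_iff_right₀ hc]
      have hKpos : 0 ≤ c * (Kc c C * (φ'' T * (ξ - η))) := by positivity
      calc c * (φ' ξ - φ' η) ≤ 4 * (ξ - η) * φ'' T := hchain
        _ = c * (4 / c * (φ'' T * (ξ - η))) := by field_simp
        _ ≤ c * (cUp c C * (φ'' T * (ξ - η))) := by
            unfold cUp; nlinarith [hKpos]

lemma mixed_sign (hc : 0 < c) (hcC : c ≤ C)
    (hd2 : ∀ t : ℝ, 0 < t → HasDerivAt φ' (φ'' t) t)
    (hdn : ∀ t : ℝ, 0 < t → c * φ' t ≤ t * φ'' t)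
    (hup : ∀ t : ℝ, 0 < t → t * φ'' t ≤ C * φ' t)
    (hpos : ∀ t : ℝ, 0 < t → 0 < φ' t)
    (hmono : MonotoneOn φ' (Set.Ici 0))
    {η ξ : ℝ} (hη : η < 0) (hξ : 0 < ξ) :
    cLow c C * (φ'' (ξ - η) * (ξ - η) ^ 2) ≤ (φ' ξ + φ' (-η)) * (ξ - η) ∧
      φ' ξ + φ' (-η) ≤ cUp c C * (φ'' (ξ - η) * (ξ - η)) := by
  obtain ⟨hC, hK, hK1, h4C, h2C, hneg, h2c, hcL⟩ := basic_facts hc hcC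
  set T := ξ - η with hTdef
  have hT : 0 < T := by simp only [hTdef]; linarith
  have hppT : 0 < φ'' T := by
    have := hdn T hT; have := hpos T hT; nlinarith
  have hφξ : 0 < φ' ξ := hpos ξ hξ
  have hφη : 0 < φ' (-η) := hpos _ (by linarith)
  set Q := (2:ℝ) ^ C with hQdef
  have hQ0 : 0 < Q := by linarith
  constructor
  · -- lower
    have hm : T / 2 ≤ max ξ (-η) := by
      rcases le_total ξ (-η) with h | h
      · rw [max_eq_right h]; simp only [hTdef]; linarith
      · rw [max_eq_left h]; simp only [hTdef]; linarith
    have hmφ : φ' (T / 2) ≤ φ' ξ + φ' (-η) := by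
      have h1 : φ' (T / 2) ≤ φ' (max ξ (-η)) :=
        hmono (Set.mem_Ici.2 (by linarith)) (Set.mem_Ici.2 (by positivity)) hm
      rcases le_total ξ (-η) with h | h
      · rw [max_eq_right h] at h1; linarith
      · rw [max_eq_left h] at h1; linarith
    have hQφ : φ' T ≤ Q * φ' (T / 2) :=
      phip_up hC hd2 hup hpos (by linarith : (0:ℝ) < T / 2)
        (by linarith : T / 2 ≤ T) (by linarith : T ≤ 2 * (T / 2))
    have hupT := hup T hT
    have hCQ : 0 < C * Q := by positivity
    rw [← mul_le_mul_iff_right₀ hCQ]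
    have hconst : C * Q * cLow c C ≤ 1 := by
      have h1 : cLow c C ≤ (1 - (2:ℝ) ^ (-c)) / (C * Q) := min_le_right _ _
      have h2 : (0:ℝ) < (2:ℝ) ^ (-c) := Real.rpow_pos_of_pos (by norm_num) _
      have h3 : C * Q * cLow c C ≤ C * Q * ((1 - (2:ℝ) ^ (-c)) / (C * Q)) :=
        mul_le_mul_of_nonneg_left h1 hCQ.le
      have h4 : C * Q * ((1 - (2:ℝ) ^ (-c)) / (C * Q)) = 1 - (2:ℝ) ^ (-c) := by
        field_simp
      linarith
    have main : φ'' T * T ^ 2 ≤ C * Q * ((φ' ξ + φ' (-η)) * T) := by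
      have s1 : T * φ'' T ≤ C * (Q * φ' (T / 2)) := by
        calc T * φ'' T ≤ C * φ' T := hupT
          _ ≤ C * (Q * φ' (T / 2)) := mul_le_mul_of_nonneg_left hQφ hC.le
      have s2 : C * (Q * φ' (T / 2)) ≤ C * (Q * (φ' ξ + φ' (-η))) := by
        have := mul_le_mul_of_nonneg_left hmφ hQ0.le
        exact mul_le_mul_of_nonneg_left this hC.le
      have := mul_le_mul_of_nonneg_right (s1.trans s2) hT.le
      nlinarith
    calc C * Q * (cLow c C * (φ'' T * T ^ 2))
        = (C * Q * cLow c C) * (φ'' T * T ^ 2) := by ring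
      _ ≤ 1 * (φ'' T * T ^ 2) := mul_le_mul_of_nonneg_right hconst (by positivity)
      _ = φ'' T * T ^ 2 := by ring
      _ ≤ C * Q * ((φ' ξ + φ' (-η)) * T) := main
  · -- upper
    have h1 : φ' ξ ≤ φ' T :=
      hmono (Set.mem_Ici.2 hξ.le) (Set.mem_Ici.2 hT.le) (by simp only [hTdef]; linarith)
    have h2 : φ' (-η) ≤ φ' T :=
      hmono (Set.mem_Ici.2 (by linarith)) (Set.mem_Ici.2 hT.le) (by simp only [hTdef]; linarith)
    have hdnT := hdn T hT
    rw [← mul_le_mul_iff_right₀ hc]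
    have hchain : c * (φ' ξ + φ' (-η)) ≤ 2 * (T * φ'' T) := by
      nlinarith [mul_le_mul_of_nonneg_left h1 hc.le, mul_le_mul_of_nonneg_left h2 hc.le]
    have hKpos : 0 ≤ c * (Kc c C * (φ'' T * T)) := by positivity
    calc c * (φ' ξ + φ' (-η)) ≤ 2 * (T * φ'' T) := hchain
      _ ≤ 4 * (φ'' T * T) := by nlinarith
      _ = c * (4 / c * (φ'' T * T)) := by field_simp
      _ ≤ c * (cUp c C * (φ'' T * T)) := by unfold cUp; nlinarith [hKpos]

end main

lemma Aof_zero (Φ' : ℝ → ℝ) : Aof Φ' 0 = 0 := if_pos rfl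

lemma Aof_of_pos (Φ' : ℝ → ℝ) {t : ℝ} (ht : 0 < t) : Aof Φ' t = Φ' t := by
  rw [Aof, if_neg ht.ne', abs_of_pos ht, mul_div_assoc, div_self ht.ne', mul_one]

lemma Aof_of_neg (Φ' : ℝ → ℝ) {t : ℝ} (ht : t < 0) : Aof Φ' t = -Φ' (-t) := by
  rw [Aof, if_neg ht.ne, abs_of_neg ht, mul_div_assoc, div_neg, div_self ht.ne, mul_neg_one]

lemma Aof_nonneg_eval (Φ' : ℝ → ℝ) (h0 : Φ' 0 = 0) {t : ℝ} (ht : 0 ≤ t) :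
    Aof Φ' t = Φ' t := by
  rcases eq_or_lt_of_le ht with h | h
  · rw [← h, Aof_zero, h0]
  · exact Aof_of_pos Φ' h

lemma Aof_nonpos_eval (Φ' : ℝ → ℝ) (h0 : Φ' 0 = 0) {t : ℝ} (ht : t ≤ 0) :
    Aof Φ' t = -Φ' (-t) := by
  rcases eq_or_lt_of_le ht with h | h
  · rw [h, Aof_zero, neg_zero, h0, neg_zero]
  · exact Aof_of_neg Φ' h

lemma Aof_continuous {φ φ' φ'' : ℝ → ℝ} (hN : IsNFunction φ φ')
    (hd2 : ∀ t : ℝ, 0 < t → HasDerivAt φ' (φ'' t) t) : Continuous (Aof φ') := by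
  rw [continuous_iff_continuousAt]
  intro t
  rcases lt_trichotomy t 0 with ht | ht | ht
  · have h1 : ContinuousAt (fun x => -φ' (-x)) t := by
      have := (hd2 (-t) (by linarith)).continuousAt
      exact (this.comp continuous_neg.continuousAt).neg
    refine h1.congr ?_
    filter_upwards [eventually_lt_nhds ht] with x hx
    rw [Aof_of_neg φ' hx]
  · subst ht
    have habs : Filter.Tendsto (fun x : ℝ => φ' |x|) (nhds 0) (nhds 0) := by
      have h1 : Filter.Tendsto (fun x : ℝ => |x|) (nhds 0) (nhdsWithin 0 (Set.Ici 0)) := by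
        rw [tendsto_nhdsWithin_iff]
        constructor
        · simpa using continuous_abs.tendsto (0:ℝ)
        · filter_upwards with x using abs_nonneg x
      have h2 := (hN.deriv_rightCont 0 le_rfl).tendsto
      rw [hN.deriv_zero] at h2
      exact h2.comp h1
    have hb : ∀ x : ℝ, |Aof φ' x| ≤ φ' |x| := by
      intro x
      rcases lt_trichotomy x 0 with hx | hx | hx
      · rw [Aof_of_neg φ' hx, abs_neg, abs_of_nonneg (hN.deriv_pos (-x) (by linarith)).le,
          abs_of_neg hx]
      · rw [hx]; simp [Aof_zero, hN.deriv_zero]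
      · rw [Aof_of_pos φ' hx, abs_of_nonneg (hN.deriv_pos x hx).le, abs_of_pos hx]
    have key : Filter.Tendsto (fun x => |Aof φ' x|) (nhds 0) (nhds 0) :=
      squeeze_zero (fun x => abs_nonneg _) hb habs
    rw [ContinuousAt, Aof_zero]
    exact (tendsto_zero_iff_abs_tendsto_zero _).2 key
  · have h1 : ContinuousAt φ' t := (hd2 t ht).continuousAt
    refine h1.congr ?_
    filter_upwards [eventually_gt_nhds ht] with x hx
    rw [Aof_of_pos φ' hx]

theorem statement7 (c C D : ℝ) (hc : 0 < c) (hcC : c ≤ C) (hD : 0 < D) :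
    ∃ c' C' : ℝ, 0 < c' ∧ c' ≤ C' ∧
      ∀ (φ φ' φ'' : ℝ → ℝ),
        IsNFunction φ φ' →
        ContDiffOn ℝ 2 φ (Set.Ioi 0) →
        (∀ t : ℝ, 0 < t → HasDerivAt φ (φ' t) t) →
        (∀ t : ℝ, 0 < t → HasDerivAt φ' (φ'' t) t) →
        Delta2 φ D →
        UniformlyConvex φ' φ'' c C →
        Continuous (Aof φ') ∧ OrthotropicGrowth φ'' (Aof φ') c' C' := by
  obtain ⟨hC, hK, hK1, h4C, h2C, hneg, h2c, hcL⟩ := basic_facts hc hcC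
  refine ⟨cLow c C, cUp c C, hcL, ?_, ?_⟩
  · have h1 : cLow c C ≤ 1 / Kc c C := min_le_left _ _
    have h2 : 1 / Kc c C ≤ 1 := by rw [div_le_one hK]; exact hK1
    have h3 : (0:ℝ) ≤ 4 / c := by positivity
    unfold cUp; linarith
  · intro φ φ' φ'' hN _ _ hd2 _ hU
    have hdn : ∀ t : ℝ, 0 < t → c * φ' t ≤ t * φ'' t := fun t ht => (hU t ht).1
    have hup : ∀ t : ℝ, 0 < t → t * φ'' t ≤ C * φ' t := fun t ht => (hU t ht).2
    refine ⟨Aof_continuous hN hd2, ?_⟩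
    have key : ∀ a b : ℝ, b < a →
        cLow c C * (φ'' (|a| + |b|) * |a - b| ^ 2) ≤ (Aof φ' a - Aof φ' b) * (a - b) ∧
        |Aof φ' a - Aof φ' b| ≤ cUp c C * (φ'' (|a| + |b|) * |a - b|) := by
      intro a b hlt
      have habs : |a - b| = a - b := abs_of_pos (by linarith)
      rcases le_or_gt 0 b with hb | hb
      · have ha0 : 0 < a := lt_of_le_of_lt hb hlt
        have h := same_sign hc hcC hd2 hdn hup hN.deriv_pos hN.deriv_zero hN.deriv_mono hb hlt
        rw [habs, abs_of_pos ha0, abs_of_nonneg hb,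
          Aof_of_pos φ' ha0, Aof_nonneg_eval φ' hN.deriv_zero hb]
        have hmono' : φ' b ≤ φ' a :=
          hN.deriv_mono (Set.mem_Ici.2 hb) (Set.mem_Ici.2 ha0.le) hlt.le
        exact ⟨h.1, by rw [abs_of_nonneg (by linarith)]; exact h.2⟩
      · rcases le_or_gt a 0 with ha | ha
        · have h := same_sign hc hcC hd2 hdn hup hN.deriv_pos hN.deriv_zero hN.deriv_mono
            (by linarith : (0:ℝ) ≤ -a) (by linarith : -a < -b)
          rw [habs, abs_of_nonpos ha, abs_of_neg hb,
            Aof_nonpos_eval φ' hN.deriv_zero ha, Aof_of_neg φ' hb]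
          have e1 : φ'' (-b + -a) = φ'' (-a + -b) := by ring_nf
          have e2 : -b - -a = a - b := by ring
          rw [e1, e2] at h
          have hmono' : φ' (-a) ≤ φ' (-b) :=
            hN.deriv_mono (Set.mem_Ici.2 (by linarith)) (Set.mem_Ici.2 (by linarith))
              (by linarith)
          constructor
          · have h1 := h.1
            have : (φ' (-b) - φ' (-a)) * (a - b) = (-φ' (-a) - -φ' (-b)) * (a - b) := by ring
            linarith [h1]
          · rw [show -φ' (-a) - -φ' (-b) = φ' (-b) - φ' (-a) by ring,
              abs_of_nonneg (by linarith)]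
            exact h.2
        · have h := mixed_sign hc hcC hd2 hdn hup hN.deriv_pos hN.deriv_mono hb ha
          rw [habs, abs_of_pos ha, abs_of_neg hb, Aof_of_pos φ' ha, Aof_of_neg φ' hb]
          have e1 : φ'' (a + -b) = φ'' (a - b) := by ring_nf
          rw [e1]
          have hφb : 0 < φ' (-b) := hN.deriv_pos _ (by linarith)
          have hφa : 0 < φ' a := hN.deriv_pos _ ha
          constructor
          · have h1 := h.1
            nlinarith [h1]
          · rw [show φ' a - -φ' (-b) = φ' a + φ' (-b) by ring,
              abs_of_nonneg (by linarith)]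
            exact h.2
    intro ξ η
    rcases lt_trichotomy η ξ with hlt | heq | hgt
    · exact key ξ η hlt
    · rw [heq]
      simp
    · have h := key η ξ hgt
      have e1 : |η| + |ξ| = |ξ| + |η| := add_comm _ _
      have e2 : |η - ξ| = |ξ - η| := abs_sub_comm _ _
      rw [e1, e2] at h
      constructor
      · have h1 := h.1
        nlinarith [h1]
      · rw [abs_sub_comm]
        exact h.2
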